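/- Let v ≥ 1 and m ≥ 2 be integers and γ ∈ ℤ. Define w_1 = (γ+1)v − γ if v is odd, and w_1 = ((γ+1)v − γ)(v − γ) if v is even. Suppose w_1 = s²·v_1 for some positive integer s and squarefree positive integer v_1, and suppose there is a prime p dividing v_1 that is self-conjugate modulo m. Then there exists no near Butson–Hadamard matrix BH_γ(v,m). -/

import Mathlib

open Matrix

/-- `H` is a near Butson–Hadamard matrix `BH_γ(v, m)`: all entries are complex `m`-th
roots of unity and `H * Hᴴ = (v - γ) • I + γ • J`. -/
def IsBH (v m : ℕ) (γ : ℂ) (H : Matrix (Fin v) (Fin v) ℂ) : Prop :=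
  (∀ i j, H i j ^ m = 1) ∧
    H * H.conjTranspose =
      ((v : ℂ) - γ) • (1 : Matrix (Fin v) (Fin v) ℂ) + γ • Matrix.of (fun _ _ => (1 : ℂ))

/-- A prime `p` coprime to `m` is self-conjugate modulo `m` if its multiplicative order
`f` modulo `m` is even and `p ^ (f / 2) ≡ -1 (mod m)`. -/
def SelfConjugate (p m : ℕ) : Prop :=
  Nat.Coprime p m ∧ Even (orderOf (p : ZMod m)) ∧
    (p : ZMod m) ^ (orderOf (p : ZMod m) / 2) = -1

open Polynomial

private lemma conj_aeval (z : ℂ) (g : ℤ[X]) :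
    (starRingEnd ℂ) (aeval z g) = aeval ((starRingEnd ℂ) z) g := by
  rw [aeval_def, aeval_def, Polynomial.hom_eval₂]
  congr 1
  exact Subsingleton.elim _ _

private lemma map_zmod_eq_zero_iff (p : ℕ) [NeZero p] (h : ℤ[X]) :
    Polynomial.map (Int.castRingHom (ZMod p)) h = 0 ↔ (Polynomial.C (p:ℤ)) ∣ h := by
  rw [Polynomial.C_dvd_iff_dvd_coeff]
  constructor
  · intro h0 i
    have h1 : (Polynomial.map (Int.castRingHom (ZMod p)) h).coeff i = 0 := by rw [h0]; simp
    rw [Polynomial.coeff_map] at h1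
    exact (ZMod.intCast_zmod_eq_zero_iff_dvd _ _).mp h1
  · intro hd
    ext i
    rw [Polynomial.coeff_map, Polynomial.coeff_zero]
    exact (ZMod.intCast_zmod_eq_zero_iff_dvd _ _).mpr (hd i)

private lemma descent (m : ℕ) (hm : 2 ≤ m) {ζ : ℂ} (hζ : IsPrimitiveRoot ζ m)
    (p : ℕ) (hp : p.Prime) (hpm : ¬ p ∣ m) (e : ℕ) (hme : m ∣ p ^ e + 1) :
    ∀ (k : ℕ) (u : ℤ), ¬ (p:ℤ) ∣ u → ∀ g : ℤ[X],
      (aeval ζ g) * (starRingEnd ℂ) (aeval ζ g) = (((p:ℤ)^(2*k+1) * u : ℤ) : ℂ) → False := by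
  haveI : Fact p.Prime := ⟨hp⟩
  have hm0 : m ≠ 0 := by omega
  have hp0 : (p : ℂ) ≠ 0 := Nat.cast_ne_zero.mpr hp.pos.ne'
  have hζm : ζ ^ m = 1 := hζ.pow_eq_one
  have hζ0 : ζ ≠ 0 := by
    intro h
    rw [h, zero_pow hm0] at hζm
    exact zero_ne_one hζm
  have habs : Complex.normSq ζ = 1 := by
    have h1 : (Complex.normSq ζ) ^ m = 1 := by
      rw [← _root_.map_pow, hζm, _root_.map_one]
    have h2 : 0 ≤ Complex.normSq ζ := Complex.normSq_nonneg ζ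
    rcases lt_trichotomy (Complex.normSq ζ) 1 with h | h | h
    · have := pow_lt_one₀ h2 h hm0
      rw [h1] at this; exact absurd this (lt_irrefl 1)
    · exact h
    · have := one_lt_pow₀ h hm0
      rw [h1] at this; exact absurd this (lt_irrefl 1)
  have hconj : (starRingEnd ℂ) ζ = ζ ^ (p ^ e) := by
    have h1 : ζ * (starRingEnd ℂ) ζ = 1 := by
      rw [Complex.mul_conj, habs, Complex.ofReal_one]
    have h2 : ζ * ζ ^ (p ^ e) = 1 := by
      obtain ⟨t, ht⟩ := hme
      have : ζ ^ (p ^ e + 1) = 1 := by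
        rw [ht, pow_mul, hζm, one_pow]
      calc ζ * ζ ^ (p ^ e) = ζ ^ (p ^ e + 1) := by rw [pow_succ, mul_comm]
      _ = 1 := this
    exact mul_left_cancel₀ hζ0 (h1.trans h2.symm)
  have hζint : IsIntegral ℤ ζ := hζ.isIntegral (by omega)
  have hΦ : Polynomial.cyclotomic m ℤ = minpoly ℤ ζ := Polynomial.cyclotomic_eq_minpoly hζ (by omega)
  have hΦζ : aeval ζ (Polynomial.cyclotomic m ℤ) = 0 := by rw [hΦ]; exact minpoly.aeval ℤ ζ
  have hsq : Squarefree (Polynomial.map (Int.castRingHom (ZMod p)) (Polynomial.cyclotomic m ℤ)) := by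
    rw [Polynomial.map_cyclotomic_int]
    refine (Polynomial.Separable.of_dvd ?_
      (Polynomial.cyclotomic.dvd_X_pow_sub_one m (ZMod p))).squarefree
    rw [Polynomial.X_pow_sub_one_separable_iff]
    simpa [Ne, ZMod.natCast_eq_zero_iff] using hpm
  -- key divisibility step
  have hkey : ∀ (N : ℕ), N ≠ 0 → ∀ g h : ℤ[X],
      (aeval ζ g) ^ N = (p:ℂ) * aeval ζ h → ∃ r : ℤ[X], aeval ζ g = (p:ℂ) * aeval ζ r := by
    intro N hN g h hgh
    have h0 : aeval ζ (g ^ N - Polynomial.C (p:ℤ) * h) = 0 := by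
      simp only [_root_.map_sub, _root_.map_pow, _root_.map_mul, Polynomial.aeval_C]
      rw [hgh]
      push_cast
      ring
    have hdvd : Polynomial.cyclotomic m ℤ ∣ g ^ N - Polynomial.C (p:ℤ) * h := by
      rw [hΦ]; exact minpoly.isIntegrallyClosed_dvd hζint h0
    have hdvd2 : (Polynomial.map (Int.castRingHom (ZMod p)) (Polynomial.cyclotomic m ℤ)) ∣
        (Polynomial.map (Int.castRingHom (ZMod p)) g) ^ N := by
      obtain ⟨q, hq⟩ := hdvd
      refine ⟨Polynomial.map (Int.castRingHom (ZMod p)) q, ?_⟩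
      have := congrArg (Polynomial.map (Int.castRingHom (ZMod p))) hq
      simp only [Polynomial.map_sub, Polynomial.map_mul, Polynomial.map_pow,
        Polynomial.map_C] at this
      rw [show ((Int.castRingHom (ZMod p)) ((p:ℤ))) = 0 by simp, Polynomial.C_0,
        zero_mul, sub_zero] at this
      exact this
    have hdvd3 := (hsq.dvd_pow_iff_dvd hN).mp hdvd2
    obtain ⟨q', hq'⟩ := hdvd3
    obtain ⟨q, rfl⟩ := Polynomial.map_surjective (Int.castRingHom (ZMod p))
      (fun x => ZMod.intCast_surjective x) q'
    have hmap0 : Polynomial.map (Int.castRingHom (ZMod p)) (g - Polynomial.cyclotomic m ℤ * q) = 0 := by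
      rw [Polynomial.map_sub, Polynomial.map_mul, hq', sub_self]
    obtain ⟨r, hr⟩ := (map_zmod_eq_zero_iff p _).mp hmap0
    refine ⟨r, ?_⟩
    have hgeq : g = Polynomial.cyclotomic m ℤ * q + Polynomial.C (p:ℤ) * r := by
      linear_combination hr
    rw [hgeq]
    simp only [_root_.map_add, _root_.map_mul, Polynomial.aeval_C, hΦζ, zero_mul, zero_add]
    push_cast
    ring
  -- frobenius congruence
  have hfrob : ∀ g : ℤ[X], ∃ h : ℤ[X],
      g ^ (p ^ e) = Polynomial.expand ℤ (p ^ e) g + Polynomial.C (p:ℤ) * h := by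
    intro g
    have hmap : Polynomial.map (Int.castRingHom (ZMod p))
        (g ^ (p ^ e) - Polynomial.expand ℤ (p ^ e) g) = 0 := by
      rw [Polynomial.map_sub, Polynomial.map_pow, Polynomial.map_expand, sub_eq_zero]
      have := Polynomial.map_iterateFrobenius_expand p
        (Polynomial.map (Int.castRingHom (ZMod p)) g) e
      rw [show iterateFrobenius (ZMod p) p e = RingHom.id (ZMod p) from
          RingHom.ext fun x => by rw [iterateFrobenius_def, ZMod.pow_card_pow]; rfl,
        Polynomial.map_id] at this
      exact this.symm
    obtain ⟨h, hh⟩ := (map_zmod_eq_zero_iff p _).mp hmap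
    exact ⟨h, by linear_combination hh⟩
  -- the step: from divisibility by p, extract β
  have hstep : ∀ (g : ℤ[X]) (c : ℤ),
      (aeval ζ g) * (starRingEnd ℂ) (aeval ζ g) = (((p:ℤ) * c : ℤ) : ℂ) →
      ∃ r : ℤ[X], aeval ζ g = (p:ℂ) * aeval ζ r := by
    intro g c hgc
    obtain ⟨h, hh⟩ := hfrob g
    have hconjg : (starRingEnd ℂ) (aeval ζ g) = (aeval ζ g) ^ (p ^ e) - (p:ℂ) * aeval ζ h := by
      rw [conj_aeval, hconj, ← Polynomial.expand_aeval]
      have h2 := congrArg (aeval ζ) hh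
      simp only [_root_.map_pow, _root_.map_add, _root_.map_mul, Polynomial.aeval_C] at h2
      push_cast at h2
      linear_combination -h2
    have hmain : (aeval ζ g) ^ (p ^ e + 1) = (p:ℂ) * aeval ζ (Polynomial.C c + g * h) := by
      have h3 := hgc
      rw [hconjg] at h3
      push_cast at h3
      simp only [_root_.map_add, _root_.map_mul, Polynomial.aeval_C, _root_.map_intCast,
        algebraMap_int_eq, eq_intCast]
      push_cast
      rw [pow_succ]
      linear_combination h3
    exact hkey (p ^ e + 1) (by positivity) g _ hmain
  intro k
  induction k with
  | zero =>
    intro u hu g hg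
    obtain ⟨r, hr⟩ := hstep g u (by rw [hg]; norm_num)
    set β := aeval ζ r with hβ
    have hββ : (u : ℂ) = (p:ℂ) * (β * (starRingEnd ℂ) β) := by
      have h2 := hg
      rw [hr, _root_.map_mul] at h2
      have hconjp : (starRingEnd ℂ) ((p:ℂ)) = (p:ℂ) := by
        rw [Complex.conj_natCast]
      rw [hconjp] at h2
      push_cast at h2
      apply mul_left_cancel₀ hp0
      linear_combination -h2
    have hmem : β * (starRingEnd ℂ) β ∈ Algebra.adjoin ℤ ({ζ} : Set ℂ) := by
      have h1 : β ∈ Algebra.adjoin ℤ ({ζ} : Set ℂ) := Polynomial.aeval_mem_adjoin_singleton ℤ ζ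
      have h2 : (starRingEnd ℂ) β ∈ Algebra.adjoin ℤ ({ζ} : Set ℂ) := by
        rw [hβ, conj_aeval, hconj, ← Polynomial.expand_aeval]
        exact Polynomial.aeval_mem_adjoin_singleton ℤ ζ
      exact mul_mem h1 h2
    have hint : IsIntegral ℤ (β * (starRingEnd ℂ) β) :=
      IsIntegral.of_mem_of_fg _ hζint.fg_adjoin_singleton _ hmem
    have hq : algebraMap ℚ ℂ ((u : ℚ) / (p : ℚ)) = β * (starRingEnd ℂ) β := by
      rw [eq_ratCast (algebraMap ℚ ℂ)]
      push_cast
      rw [hββ]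
      exact mul_div_cancel_left₀ _ hp0
    have hqint : IsIntegral ℤ ((u : ℚ) / (p : ℚ)) := by
      rw [← isIntegral_algHom_iff ((algebraMap ℚ ℂ).toIntAlgHom)
        (algebraMap ℚ ℂ).injective]
      show IsIntegral ℤ (algebraMap ℚ ℂ _)
      rw [hq]
      exact hint
    obtain ⟨y, hy⟩ := IsIntegrallyClosed.isIntegral_iff.mp hqint
    apply hu
    refine ⟨y, ?_⟩
    have hpq : (p:ℚ) ≠ 0 := Nat.cast_ne_zero.mpr hp.pos.ne'
    have : (u:ℚ) = (p:ℚ) * y := by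
      rw [show ((y:ℤ):ℚ) = algebraMap ℤ ℚ y from rfl, hy]
      field_simp
    exact_mod_cast this
  | succ k ih =>
    intro u hu g hg
    obtain ⟨r, hr⟩ := hstep g ((p:ℤ)^(2*(k+1)) * u)
      (by rw [hg]; push_cast; ring)
    apply ih u hu r
    have h2 := hg
    rw [hr, _root_.map_mul, Complex.conj_natCast] at h2
    push_cast at h2 ⊢
    have h3 : (p:ℂ)^2 * (aeval ζ r * (starRingEnd ℂ) (aeval ζ r))
        = (p:ℂ)^2 * ((p:ℂ)^(2*k+1) * (u:ℂ)) := by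
      rw [show (p:ℂ)^2 * ((p:ℂ)^(2*k+1) * (u:ℂ)) = (p:ℂ)^(2*(k+1)+1) * (u:ℂ) by ring]
      linear_combination h2
    exact mul_left_cancel₀ (pow_ne_zero 2 hp0) h3

private lemma det_smul_one_add_smul_J (v : ℕ) (hv : 1 ≤ v) (a b : ℂ) (ha : a ≠ 0) :
    Matrix.det (a • (1 : Matrix (Fin v) (Fin v) ℂ) + b • Matrix.of (fun _ _ => (1:ℂ)))
      = a ^ (v - 1) * (a + v * b) := by
  have hEq : a • (1 : Matrix (Fin v) (Fin v) ℂ) + b • Matrix.of (fun _ _ => (1:ℂ))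
      = a • (1 + Matrix.replicateCol (Fin 1) (fun _ => a⁻¹ * b) * Matrix.replicateRow (Fin 1) (fun _ => (1:ℂ))) := by
    ext i j
    simp only [Matrix.add_apply, Matrix.smul_apply, Matrix.of_apply, Matrix.mul_apply,
      Matrix.replicateCol_apply, Matrix.replicateRow_apply, Finset.univ_unique, Finset.sum_const,
      Finset.card_singleton, one_smul, smul_eq_mul, mul_one, mul_add]
    rw [mul_inv_cancel_left₀ ha]
  rw [hEq, Matrix.det_smul]
  erw [Matrix.det_one_add_replicateCol_mul_replicateRow]
  have hcard : Fintype.card (Fin v) = v := Fintype.card_fin v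
  rw [hcard]
  have hv' : a ^ v = a ^ (v-1) * a := by rw [← pow_succ]; congr 1; omega
  simp only [dotProduct, Finset.sum_const, Finset.card_univ, hcard, nsmul_eq_mul, one_mul]
  rw [hv']
  field_simp

/-- Brock's criterion for near Butson–Hadamard matrices: with
`w₁ = (γ+1)v - γ` for odd `v` and `w₁ = ((γ+1)v - γ)(v - γ)` for even `v`, if the
squarefree part `v₁` of `w₁` has a prime divisor that is self-conjugate modulo `m`,
then no `BH_γ(v, m)` exists. -/
theorem stmt_6 (v m : ℕ) (hv : 1 ≤ v) (hm : 2 ≤ m) (γ : ℤ) (w1 : ℤ)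
    (hw1 : w1 = if Odd v then (γ + 1) * v - γ else ((γ + 1) * v - γ) * ((v : ℤ) - γ))
    (s v1 : ℕ) (hs : 0 < s) (hv1 : 0 < v1) (hsf : Squarefree v1)
    (hfac : w1 = (s : ℤ) ^ 2 * v1)
    (p : ℕ) (hp : p.Prime) (hpv1 : p ∣ v1) (hsc : SelfConjugate p m) :
    ¬∃ H : Matrix (Fin v) (Fin v) ℂ, IsBH v m (γ : ℂ) H := by
  rintro ⟨H, hent, hmat⟩
  obtain ⟨hcop, -, hpe⟩ := hsc
  haveI : NeZero m := ⟨by omega⟩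
  haveI : Fact p.Prime := ⟨hp⟩
  have hpm : ¬ p ∣ m := (Nat.Prime.coprime_iff_not_dvd hp).mp hcop
  set e := orderOf ((p : ZMod m)) / 2 with he
  have hme : m ∣ p ^ e + 1 := by
    have h0 : ((p ^ e + 1 : ℕ) : ZMod m) = 0 := by
      push_cast
      rw [hpe]
      ring
    exact (ZMod.natCast_eq_zero_iff _ _).mp h0
  have hv10 : v1 ≠ 0 := hv1.ne'
  have hs0 : s ≠ 0 := hs.ne'
  have hv1f : v1.factorization p = 1 := by
    have h1 := (Nat.squarefree_iff_factorization_le_one hv10).mp hsf p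
    have h2 := hp.factorization_pos_of_dvd hv10 hpv1
    omega
  by_cases hvγ : (v : ℤ) = γ
  · -- degenerate case v = γ
    rcases Nat.even_or_odd v with hve | hvo
    · rw [if_neg (Nat.not_odd_iff_even.mpr hve)] at hw1
      have h0 : w1 = 0 := by rw [hw1, ← hvγ]; ring
      rw [hfac] at h0
      have : ((s:ℤ))^2 * (v1:ℤ) ≠ 0 := by positivity
      exact this h0
    · rw [if_pos hvo] at hw1
      have hw : ((s^2 * v1 : ℕ) : ℤ) = ((v^2 : ℕ) : ℤ) := by
        push_cast
        rw [← hfac, hw1, ← hvγ]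
        ring
      have hw' : s^2 * v1 = v^2 := by exact_mod_cast hw
      have hv0 : v ≠ 0 := by omega
      have hfa := congrArg (fun f => Nat.factorization f p) hw'
      simp only [Nat.factorization_mul (pow_ne_zero 2 hs0) hv10, Nat.factorization_pow,
        Finsupp.add_apply, Finsupp.smul_apply, smul_eq_mul] at hfa
      omega
  · -- main case
    have hζ : IsPrimitiveRoot (Complex.exp (2 * Real.pi * Complex.I / m)) m :=
      Complex.isPrimitiveRoot_exp m (by omega)
    set ζ := Complex.exp (2 * Real.pi * Complex.I / m) with hζdef
    have hdet_mem : H.det ∈ Algebra.adjoin ℤ ({ζ} : Set ℂ) := by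
      rw [Matrix.det_apply']
      refine Subalgebra.sum_mem _ fun σ _ => ?_
      refine Subalgebra.mul_mem _ (Subalgebra.intCast_mem _ _) (Subalgebra.prod_mem _ fun i _ => ?_)
      obtain ⟨k, -, hk⟩ := hζ.eq_pow_of_pow_eq_one (hent (σ i) i)
      rw [← hk]
      exact pow_mem (Algebra.self_mem_adjoin_singleton ℤ ζ) k
    obtain ⟨g, hg⟩ : ∃ g : ℤ[X], Polynomial.aeval ζ g = H.det := by
      rw [Algebra.adjoin_singleton_eq_range_aeval, AlgHom.mem_range] at hdet_mem
      exact hdet_mem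
    have ha : ((v:ℂ) - (γ:ℂ)) ≠ 0 := by
      intro h0
      apply hvγ
      have : ((v:ℤ):ℂ) = ((γ:ℤ):ℂ) := by
        push_cast
        linear_combination h0
      exact_mod_cast this
    have hdet := congrArg Matrix.det hmat
    rw [Matrix.det_mul, Matrix.det_conjTranspose,
      det_smul_one_add_smul_J v hv _ _ ha] at hdet
    set z : ℤ := (v:ℤ) - γ with hz
    set Y : ℤ := (γ+1) * (v:ℤ) - γ with hY
    set W : ℤ := z ^ (v-1) * Y with hW
    have hdet' : Polynomial.aeval ζ g * (starRingEnd ℂ) (Polynomial.aeval ζ g) = ((W:ℤ):ℂ) := by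
      rw [hg, show (starRingEnd ℂ) H.det = star H.det from rfl, hdet, hW, hz, hY]
      push_cast
      ring
    have hz0 : z ≠ 0 := sub_ne_zero.mpr hvγ
    have hw10 : w1 ≠ 0 := by
      rw [hfac]
      positivity
    have hY0 : Y ≠ 0 := by
      rcases Nat.even_or_odd v with hve | hvo
      · rw [if_neg (Nat.not_odd_iff_even.mpr hve)] at hw1
        intro h0
        apply hw10
        rw [hw1, h0, zero_mul]
      · rw [if_pos hvo] at hw1
        intro h0
        apply hw10
        rw [hw1, h0]
    have hW0 : W ≠ 0 := mul_ne_zero (pow_ne_zero _ hz0) hY0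
    set n := W.natAbs with hn
    have hn0 : n ≠ 0 := Int.natAbs_ne_zero.mpr hW0
    set j := n.factorization p with hj
    have hzn0 : z.natAbs ≠ 0 := Int.natAbs_ne_zero.mpr hz0
    have hYn0 : Y.natAbs ≠ 0 := Int.natAbs_ne_zero.mpr hY0
    have hjeq : j = (v-1) * (z.natAbs.factorization p) + Y.natAbs.factorization p := by
      rw [hj, hn, hW, Int.natAbs_mul, Int.natAbs_pow,
        Nat.factorization_mul (pow_ne_zero _ hzn0) hYn0, Nat.factorization_pow]
      simp
    have hjodd : Odd j := by
      rcases Nat.even_or_odd v with hve | hvo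
      · -- even case : Y * z = w1 = s^2 * v1
        rw [if_neg (Nat.not_odd_iff_even.mpr hve)] at hw1
        have hprod : Y.natAbs * z.natAbs = s^2 * v1 := by
          have h1 : Y * z = (s:ℤ)^2 * (v1:ℤ) := by rw [← hw1, hfac]
          have h2 := congrArg Int.natAbs h1
          rw [Int.natAbs_mul] at h2
          rw [h2, Int.natAbs_mul, Int.natAbs_pow]
          simp
        have hfa := congrArg (fun f => Nat.factorization f p) hprod
        simp only [Nat.factorization_mul hYn0 hzn0,
          Nat.factorization_mul (pow_ne_zero 2 hs0) hv10, Nat.factorization_pow,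
          Finsupp.add_apply, Finsupp.smul_apply, smul_eq_mul, hv1f] at hfa
        -- hfa : Yf + zf = 2 * sf + 1
        have hv2 : v - 1 = (v - 2) + 1 := by
          rcases hve with ⟨d, hd⟩
          omega
        have hev2 : Even (v - 2) := by
          rcases hve with ⟨d, hd⟩
          exact ⟨d - 1, by omega⟩
        rw [hjeq, hv2, Nat.succ_mul, add_assoc]
        refine (hev2.mul_right _).add_odd ?_
        exact ⟨s.factorization p, by omega⟩
      · -- odd case : Y = w1 = s^2 * v1
        rw [if_pos hvo] at hw1
        have hYn : Y.natAbs = s^2 * v1 := by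
          have : Y = ((s^2 * v1 : ℕ) : ℤ) := by push_cast; rw [← hfac, hw1, hY]
          rw [this, Int.natAbs_natCast]
        have hYf : Y.natAbs.factorization p = 2 * s.factorization p + 1 := by
          rw [hYn, Nat.factorization_mul (pow_ne_zero 2 hs0) hv10, Nat.factorization_pow]
          simp [Finsupp.add_apply, Finsupp.smul_apply, smul_eq_mul, hv1f]
        obtain ⟨d, hd⟩ := hvo
        rw [hjeq, hYf, show v - 1 = 2*d by omega]
        exact ⟨d * (z.natAbs.factorization p) + s.factorization p, by ring⟩
    have hpj : ((p:ℤ))^j ∣ W := by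
      have h1 : (p^j : ℕ) ∣ n := Nat.ordProj_dvd n p
      have h2 : ((p^j : ℕ) : ℤ) ∣ (n : ℤ) := Int.natCast_dvd_natCast.mpr h1
      have h3 : (n : ℤ) ∣ W := Int.natAbs_dvd.mpr dvd_rfl
      calc ((p:ℤ))^j = ((p^j : ℕ) : ℤ) := by push_cast; ring
      _ ∣ (n:ℤ) := h2
      _ ∣ W := h3
    set u := W / (p:ℤ)^j with hu
    have hWu : W = (p:ℤ)^j * u := (Int.mul_ediv_cancel' hpj).symm
    have hnu : ¬ (p:ℤ) ∣ u := by
      rintro ⟨t, ht⟩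
      have h1 : ((p:ℤ))^(j+1) ∣ W := ⟨t, by rw [hWu, ht]; ring⟩
      have h2 : (p^(j+1) : ℕ) ∣ n := by
        rw [hn]
        refine Int.natCast_dvd.mp ?_
        exact_mod_cast h1
      have := (Nat.Prime.pow_dvd_iff_le_factorization hp hn0).mp h2
      omega
    obtain ⟨k, hk⟩ := hjodd
    exact descent m hm hζ p hp hpm e hme k u hnu g
      (by rw [hdet', hWu, hk])
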